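/- arXiv:2402.06278 — 4 statements merged into one kernel-verified Lean document; each statement's English description precedes it below -/
import Mathlib

section
/- Cone of directions around the magnetic field: let b, ξ ∈ ℝ³ with b ≠ 0 and ξ ≠ 0, and set v := |ξ| b + (⟨b,ξ⟩/|ξ|) ξ. Then v ≠ 0, and the angle between v and b, i.e. arccos(⟨v,b⟩/(|v||b|)), is at most arctan(1/(2√2)). -/
noncomputable section

lemma arccos_antitone : Antitone Real.arccos := fun x y h => by
  simp only [Real.arccos_eq_pi_div_two_sub_arcsin]
  linarith [Real.monotone_arcsin h]

lemma arccos_target : Real.arccos (2 * Real.sqrt 2 / 3) = Real.arctan (1 / (2 * Real.sqrt 2)) := by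
  have h2 : (0:ℝ) < Real.sqrt 2 := Real.sqrt_pos.mpr (by norm_num)
  have hx : (0:ℝ) < 2 * Real.sqrt 2 / 3 := by positivity
  rw [Real.arccos_eq_arctan hx]
  congr 1
  have hsq : (2 * Real.sqrt 2 / 3) ^ 2 = 8 / 9 := by
    have : Real.sqrt 2 ^ 2 = 2 := Real.sq_sqrt (by norm_num)
    field_simp
    nlinarith [this]
  rw [hsq]
  have : (1 : ℝ) - 8 / 9 = (1/3)^2 := by norm_num
  rw [this, Real.sqrt_sq (by norm_num)]
  rw [div_div_div_eq]
  rw [one_mul, div_mul_eq_div_div_swap, div_right_comm, div_self (by norm_num : (3:ℝ) ≠ 0)]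

/-- Cone of directions around the magnetic field: for nonzero b, ξ ∈ ℝ³, the group
velocity v = |ξ|b + (⟨b,ξ⟩/|ξ|)ξ is nonzero and the angle between v and b is at most
arctan(1/(2√2)). -/
theorem cone_of_directions (b ξ : EuclideanSpace ℝ (Fin 3)) (hb : b ≠ 0) (hξ : ξ ≠ 0) :
    ‖ξ‖ • b + ((inner ℝ b ξ : ℝ) / ‖ξ‖) • ξ ≠ 0 ∧
      Real.arccos
          ((inner ℝ (‖ξ‖ • b + ((inner ℝ b ξ : ℝ) / ‖ξ‖) • ξ) b : ℝ) /
            (‖‖ξ‖ • b + ((inner ℝ b ξ : ℝ) / ‖ξ‖) • ξ‖ * ‖b‖))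
        ≤ Real.arctan (1 / (2 * Real.sqrt 2)) := by
  have ht : (0:ℝ) < ‖ξ‖ := norm_pos_iff.mpr hξ
  have hB : (0:ℝ) < ‖b‖ := norm_pos_iff.mpr hb
  set t : ℝ := ‖ξ‖ with htdef
  set c : ℝ := inner ℝ b ξ with hcdef
  set v : EuclideanSpace ℝ (Fin 3) := t • b + (c / t) • ξ with hvdef
  have hvb : (inner ℝ v b : ℝ) = t * ‖b‖ ^ 2 + c ^ 2 / t := by
    rw [hvdef, inner_add_left, real_inner_smul_left, real_inner_smul_left,
      real_inner_self_eq_norm_sq]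
    have hcb : (inner ℝ ξ b : ℝ) = c := by rw [hcdef]; exact real_inner_comm b ξ
    rw [hcb]; ring
  have hvv : ‖v‖ ^ 2 = t ^ 2 * ‖b‖ ^ 2 + 3 * c ^ 2 := by
    rw [hvdef, norm_add_sq_real, norm_smul, norm_smul, real_inner_smul_left,
      real_inner_smul_right, ← hcdef, ← htdef]
    rw [Real.norm_eq_abs, Real.norm_eq_abs, abs_of_pos ht, abs_div, abs_of_pos ht]
    field_simp
    rw [sq_abs]; ring
  have hvbpos : (0:ℝ) < (inner ℝ v b : ℝ) := by
    rw [hvb]; positivity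
  have hvne : v ≠ 0 := by
    intro h
    rw [h, inner_zero_left] at hvbpos
    exact lt_irrefl 0 hvbpos
  refine ⟨hvne, ?_⟩
  have hvnorm : (0:ℝ) < ‖v‖ := norm_pos_iff.mpr hvne
  -- key inequality: 2√2 * ‖v‖ * ‖b‖ ≤ 3 * ⟨v,b⟩
  have h2 : (0:ℝ) < Real.sqrt 2 := Real.sqrt_pos.mpr (by norm_num)
  have hs2 : Real.sqrt 2 ^ 2 = 2 := Real.sq_sqrt (by norm_num)
  have key : 2 * Real.sqrt 2 * (‖v‖ * ‖b‖) ≤ 3 * (inner ℝ v b : ℝ) := by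
    have hL : (0:ℝ) ≤ 2 * Real.sqrt 2 * (‖v‖ * ‖b‖) := by positivity
    have hR : (0:ℝ) ≤ 3 * (inner ℝ v b : ℝ) := by linarith
    have hsq : (2 * Real.sqrt 2 * (‖v‖ * ‖b‖)) ^ 2 ≤ (3 * (inner ℝ v b : ℝ)) ^ 2 := by
      rw [hvb]
      have e1 : (2 * Real.sqrt 2 * (‖v‖ * ‖b‖)) ^ 2 = 8 * (‖v‖^2 * ‖b‖^2) := by
        nlinarith [hs2]
      rw [e1, hvv]
      have ht' : t ≠ 0 := ne_of_gt ht
      have ht2 : (0:ℝ) < t ^ 2 := by positivity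
      rw [show (3*(t*‖b‖^2+c^2/t))^2 = 9*(t^2*‖b‖^2+c^2)^2/t^2 from by field_simp; ring,
        le_div_iff₀ ht2]
      nlinarith [sq_nonneg (t^2 * ‖b‖^2 - 3 * c^2)]
    nlinarith [hsq, hL, hR]
  have hq : 2 * Real.sqrt 2 / 3 ≤ (inner ℝ v b : ℝ) / (‖v‖ * ‖b‖) := by
    rw [div_le_div_iff₀ (by norm_num) (by positivity)]
    linarith [key]
  calc Real.arccos ((inner ℝ v b : ℝ) / (‖v‖ * ‖b‖))
      ≤ Real.arccos (2 * Real.sqrt 2 / 3) := arccos_antitone hq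
    _ = Real.arctan (1 / (2 * Real.sqrt 2)) := arccos_target
end
end

section
/- Conic directionality near the uniform field: let b, ξ ∈ ℝ³ with ξ ≠ 0 and |b − e₃| < 1/2, where e₃ = (0,0,1), and set v := |ξ| b + (⟨b,ξ⟩/|ξ|) ξ. Then the third component v₃ of v is strictly positive and |ξ| ≤ 12 v₃. -/
noncomputable section

theorem coord_abs_le_norm (x : EuclideanSpace ℝ (Fin 3)) (i : Fin 3) : |x i| ≤ ‖x‖ := by
  have h1 : (inner ℝ (EuclideanSpace.single i (1 : ℝ)) x : ℝ) = x i := by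
    simp [EuclideanSpace.inner_single_left]
  have h2 := abs_real_inner_le_norm (EuclideanSpace.single i (1 : ℝ)) x
  rw [h1] at h2
  simpa using h2

/-- Conic directionality near the uniform field: if ξ ≠ 0 and |b − e₃| < 1/2, then the
third component of the group velocity v = |ξ|b + (⟨b,ξ⟩/|ξ|)ξ is strictly positive
and |ξ| ≤ 12 v₃. -/
theorem conic_directionality_near_e3 (b ξ : EuclideanSpace ℝ (Fin 3)) (hξ : ξ ≠ 0)
    (hb : ‖b - EuclideanSpace.single (2 : Fin 3) (1 : ℝ)‖ < 1 / 2) :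
    0 < (‖ξ‖ • b + ((inner ℝ b ξ : ℝ) / ‖ξ‖) • ξ) (2 : Fin 3) ∧
      ‖ξ‖ ≤ 12 * (‖ξ‖ • b + ((inner ℝ b ξ : ℝ) / ‖ξ‖) • ξ) (2 : Fin 3) := by
  set e3 : EuclideanSpace ℝ (Fin 3) := EuclideanSpace.single (2 : Fin 3) (1 : ℝ) with he3
  have hr : (0 : ℝ) < ‖ξ‖ := norm_pos_iff.mpr hξ
  set r := ‖ξ‖ with hrdef
  set s := ξ 2 with hs
  set c : ℝ := inner ℝ (b - e3) ξ with hc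
  -- |s| ≤ r
  have hsr : |s| ≤ r := coord_abs_le_norm ξ 2
  -- |c| ≤ (1/2) r
  have hcr : |c| ≤ (1/2) * r := by
    have h2 := abs_real_inner_le_norm (b - e3) ξ
    have : ‖b - e3‖ * ‖ξ‖ ≤ (1/2) * r := by
      apply mul_le_mul_of_nonneg_right (le_of_lt hb) (le_of_lt hr) |>.trans_eq rfl
    exact h2.trans this
  -- b 2 > 1/2
  have hb2 : (1:ℝ)/2 < b 2 := by
    have h1 : |b 2 - 1| < 1/2 := by
      have := coord_abs_le_norm (b - e3) 2
      have he : (b - e3) 2 = b 2 - 1 := by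
        simp [he3, EuclideanSpace.single_apply]
      rw [he] at this
      exact lt_of_le_of_lt this hb
    have := abs_lt.mp h1
    linarith [this.1]
  -- inner ℝ b ξ = c + s
  have hinner : (inner ℝ b ξ : ℝ) = c + s := by
    have : (inner ℝ b ξ : ℝ) = inner ℝ (b - e3) ξ + (inner ℝ e3 ξ : ℝ) := by
      rw [← inner_add_left]; norm_num
    rw [this, hc]
    congr 1
    simp [he3, EuclideanSpace.inner_single_left, hs]
  -- component computation
  have happ : (‖ξ‖ • b + ((inner ℝ b ξ : ℝ) / ‖ξ‖) • ξ) (2 : Fin 3)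
      = r * b 2 + ((c + s) / r) * s := by
    simp [PiLp.add_apply, PiLp.smul_apply, smul_eq_mul, hinner, hrdef, hs]
  rw [happ]
  have key : r / 12 ≤ r * b 2 + ((c + s) / r) * s := by
    have expand : r * b 2 + ((c + s) / r) * s = (r * (r * b 2) + (c + s) * s) / r := by
      field_simp
    rw [expand, div_le_div_iff₀ (by norm_num) hr]
    have habs : -(1 / 2 * r * |s|) ≤ c * s := by
      have h1 : |c * s| ≤ 1 / 2 * r * |s| := by
        rw [abs_mul]
        exact mul_le_mul_of_nonneg_right hcr (abs_nonneg s)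
      linarith [neg_abs_le (c * s)]
    have h2 : |s| ≤ r := hsr
    have h3 : s * s = |s| * |s| := (abs_mul_abs_self s).symm
    nlinarith [sq_nonneg (|s| - r / 4), mul_pos hr hr, abs_nonneg s]
  constructor
  · linarith [div_pos hr (by norm_num : (0:ℝ) < 12)]
  · linarith
end
end

section
/- Frequency evolution formula: let B: ℝ³ → ℝ³ be differentiable and let (X, Ξ) be a bicharacteristic associated with p_B. Then for every t ∈ ℝ, the function s ↦ |Ξ(s)| is differentiable at t with derivative −Σ_{α,β} D^{αβ}(X(t)) Ξ_α(t) Ξ_β(t), where D^{αβ} := (1/2)(∂_α B^β + ∂_β B^α) is the deformation tensor of B. -/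
noncomputable section

/-- ℝ³ with the Euclidean inner product and norm. -/
abbrev E3 : Type := EuclideanSpace ℝ (Fin 3)

/-- `(X, Ξ)` is a bicharacteristic associated with the symbol
`p_B(x,ξ) = (B(x)·ξ)|ξ|`: `Ξ` never vanishes and the Hamiltonian system
`Ẋ = |Ξ| B(X) + (⟨B(X),Ξ⟩/|Ξ|) Ξ`, `Ξ̇_α = −|Ξ| Σ_β (∂_α B^β)(X) Ξ_β` holds. -/
def IsBicharacteristic (B : E3 → E3) (X Ξ : ℝ → E3) : Prop :=
  (∀ t, Ξ t ≠ 0) ∧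
  (∀ t, HasDerivAt X
    (‖Ξ t‖ • B (X t) + ((inner ℝ (B (X t)) (Ξ t) : ℝ) / ‖Ξ t‖) • Ξ t) t) ∧
  (∀ t (α : Fin 3), HasDerivAt (fun s => Ξ s α)
    (-(‖Ξ t‖ * ∑ β : Fin 3,
        fderiv ℝ B (X t) (EuclideanSpace.single α (1 : ℝ)) β * Ξ t β)) t)

/-- Frequency evolution formula: along any bicharacteristic of `p_B`, the function
`s ↦ |Ξ(s)|` is differentiable with derivative `−Σ_{α,β} D^{αβ}(X(t)) Ξ_α(t) Ξ_β(t)`,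
where `D^{αβ} = (1/2)(∂_α B^β + ∂_β B^α)` is the deformation tensor of `B`. -/
theorem frequency_evolution (B : E3 → E3) (hB : Differentiable ℝ B)
    (X Ξ : ℝ → E3) (hbc : IsBicharacteristic B X Ξ) (t : ℝ) :
    HasDerivAt (fun s => ‖Ξ s‖)
      (-(∑ α : Fin 3, ∑ β : Fin 3,
        (1 / 2) * (fderiv ℝ B (X t) (EuclideanSpace.single α (1 : ℝ)) β
            + fderiv ℝ B (X t) (EuclideanSpace.single β (1 : ℝ)) α)
          * Ξ t α * Ξ t β)) t := by
  obtain ⟨hne, hX, hΞ⟩ := hbc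
  set A : Fin 3 → Fin 3 → ℝ := fun α β =>
    fderiv ℝ B (X t) (EuclideanSpace.single α (1 : ℝ)) β with hA
  set V : E3 := WithLp.toLp 2 (fun α => -(‖Ξ t‖ * ∑ β : Fin 3, A α β * Ξ t β) : Fin 3 → ℝ) with hV
  have hΞd : HasDerivAt Ξ V t := by
    have h1 : HasDerivAt (fun s => (Ξ s).ofLp)
        (fun α => -(‖Ξ t‖ * ∑ β : Fin 3, A α β * Ξ t β) : Fin 3 → ℝ) t :=
      hasDerivAt_pi.2 fun α => hΞ t α
    exact ((EuclideanSpace.equiv (Fin 3) ℝ).symm.toContinuousLinearMap.hasFDerivAt.comp_hasDerivAt t h1 :)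
  have hnormsq : HasDerivAt (fun s => ‖Ξ s‖ ^ 2) (2 * inner ℝ (Ξ t) V) t := hΞd.norm_sq
  have hpos : (0:ℝ) < ‖Ξ t‖ := norm_pos_iff.2 (hne t)
  have hsq : (‖Ξ t‖ ^ 2 : ℝ) ≠ 0 := by positivity
  have hsqrt := hnormsq.sqrt hsq
  have heq : (fun s => Real.sqrt (‖Ξ s‖ ^ 2)) = fun s => ‖Ξ s‖ := by
    funext s; rw [Real.sqrt_sq (norm_nonneg _)]
  rw [heq] at hsqrt
  convert hsqrt using 1
  rw [Real.sqrt_sq (norm_nonneg _)]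
  have hinner : (inner ℝ (Ξ t) V : ℝ) = ∑ α : Fin 3, Ξ t α * V α := by
    simp [PiLp.inner_apply, RCLike.inner_apply, mul_comm]
  have hsym : (∑ α : Fin 3, ∑ β : Fin 3, (1/2 : ℝ)*(A α β + A β α)*Ξ t α*Ξ t β)
      = ∑ α : Fin 3, ∑ β : Fin 3, A α β * Ξ t α * Ξ t β := by
    have hc : (∑ α : Fin 3, ∑ β : Fin 3, A β α * Ξ t α * Ξ t β)
        = ∑ α : Fin 3, ∑ β : Fin 3, A α β * Ξ t α * Ξ t β := by
      rw [Finset.sum_comm]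
      exact Finset.sum_congr rfl fun α _ => Finset.sum_congr rfl fun β _ => by ring
    calc (∑ α : Fin 3, ∑ β : Fin 3, (1/2 : ℝ)*(A α β + A β α)*Ξ t α*Ξ t β)
        = ∑ α : Fin 3, ∑ β : Fin 3,
            ((1/2:ℝ)*(A α β * Ξ t α * Ξ t β) + (1/2:ℝ)*(A β α * Ξ t α * Ξ t β)) :=
          Finset.sum_congr rfl fun α _ => Finset.sum_congr rfl fun β _ => by ring
      _ = (1/2:ℝ) * (∑ α : Fin 3, ∑ β : Fin 3, A α β * Ξ t α * Ξ t β)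
          + (1/2:ℝ) * (∑ α : Fin 3, ∑ β : Fin 3, A β α * Ξ t α * Ξ t β) := by
          simp [Finset.sum_add_distrib, Finset.mul_sum]
      _ = _ := by rw [hc]; ring
  have h2 : ∑ α : Fin 3, Ξ t α * V α
      = -(‖Ξ t‖ * ∑ α : Fin 3, ∑ β : Fin 3, A α β * Ξ t α * Ξ t β) := by
    rw [Finset.mul_sum, ← Finset.sum_neg_distrib]
    refine Finset.sum_congr rfl fun α _ => ?_
    simp only [hV, mul_neg, Finset.mul_sum, neg_inj]
    exact Finset.sum_congr rfl fun β _ => by ring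
  rw [hinner, h2, hsym]
  field_simp
end
end

section
/- Frequency comparability under the Takeuchi–Mizohata-type condition: let B: ℝ³ → ℝ³ be differentiable, let (X, Ξ) be a bicharacteristic associated with p_B, and let A > 0. Suppose the function t ↦ ‖DB(X(t))‖ · |Ξ(t)| is integrable over ℝ with ∫_ℝ ‖DB(X(t))‖ |Ξ(t)| dt ≤ A, where ‖DB(x)‖ denotes the operator norm of the Fréchet derivative of B at x. Then |Ξ(t)| ≤ e^A |Ξ(t')| for all t, t' ∈ ℝ. -/
open MeasureTheory

noncomputable section

lemma sum_single_eq (x : E3) :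
    ∑ α : Fin 3, x α • EuclideanSpace.single α (1 : ℝ) = x := by
  ext i
  rw [WithLp.ofLp_sum, Finset.sum_apply]
  simp [EuclideanSpace.single_apply]

lemma map_coord (L : E3 →L[ℝ] E3) (x : E3) (β : Fin 3) :
    L x β = ∑ α : Fin 3, x α * L (EuclideanSpace.single α (1 : ℝ)) β := by
  conv_lhs => rw [← sum_single_eq x]
  rw [map_sum, WithLp.ofLp_sum, Finset.sum_apply]
  congr 1
  ext α
  rw [L.map_smul]
  rfl

/-- Frequency comparability under the Takeuchi–Mizohata-type condition: if
`t ↦ ‖DB(X(t))‖ |Ξ(t)|` is integrable over ℝ with integral at most `A`, then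
`|Ξ(t)| ≤ e^A |Ξ(t')|` for all `t, t'`. -/
theorem frequency_comparability (B : E3 → E3) (hB : Differentiable ℝ B)
    (X Ξ : ℝ → E3) (hbc : IsBicharacteristic B X Ξ) (A : ℝ) (hA : 0 < A)
    (hint : Integrable (fun t : ℝ => ‖fderiv ℝ B (X t)‖ * ‖Ξ t‖))
    (hbound : (∫ t : ℝ, ‖fderiv ℝ B (X t)‖ * ‖Ξ t‖) ≤ A) :
    ∀ t t' : ℝ, ‖Ξ t‖ ≤ Real.exp A * ‖Ξ t'‖ := by
  obtain ⟨hne, hX, hXi⟩ := hbc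
  set h : ℝ → ℝ := fun t => ‖fderiv ℝ B (X t)‖ * ‖Ξ t‖ with hh
  have hnorm_pos : ∀ t, 0 < ‖Ξ t‖ := fun t => norm_pos_iff.2 (hne t)
  -- q t = ‖Ξ t‖²
  set q : ℝ → ℝ := fun t => ∑ α : Fin 3, (Ξ t α) ^ 2 with hq
  have hq_eq : ∀ t, q t = ‖Ξ t‖ ^ 2 := by
    intro t
    rw [EuclideanSpace.norm_eq, Real.sq_sqrt]
    · simp [hq]
    · positivity
  have hq_pos : ∀ t, 0 < q t := fun t => by
    rw [hq_eq]; exact pow_pos (hnorm_pos t) 2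
  -- derivative of q
  set q' : ℝ → ℝ := fun t => ∑ α : Fin 3,
      2 * Ξ t α * (-(‖Ξ t‖ * ∑ β : Fin 3,
        fderiv ℝ B (X t) (EuclideanSpace.single α (1 : ℝ)) β * Ξ t β)) with hq'
  have hq_deriv : ∀ t, HasDerivAt q (q' t) t := by
    intro t
    refine HasDerivAt.fun_sum fun α _ => ?_
    have := (hXi t α).fun_pow 2
    simpa [mul_comm, mul_assoc, mul_left_comm] using this
  -- rewrite q' via the inner product
  have key : ∀ t, q' t
      = -2 * ‖Ξ t‖ * (inner ℝ (fderiv ℝ B (X t) (Ξ t)) (Ξ t) : ℝ) := by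
    intro t
    have hinner : (inner ℝ (fderiv ℝ B (X t) (Ξ t)) (Ξ t) : ℝ)
        = ∑ β : Fin 3, fderiv ℝ B (X t) (Ξ t) β * Ξ t β := by
      simp [PiLp.inner_apply, RCLike.inner_apply, mul_comm]
    rw [hinner]
    simp only [hq', map_coord (fderiv ℝ B (X t)) (Ξ t), Fin.sum_univ_three]
    ring
  have hq'_bound : ∀ t, |q' t| ≤ 2 * h t * q t := by
    intro t
    rw [key, hq_eq]
    have h1 : |(inner ℝ (fderiv ℝ B (X t) (Ξ t)) (Ξ t) : ℝ)|
        ≤ ‖fderiv ℝ B (X t)‖ * ‖Ξ t‖ * ‖Ξ t‖ := by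
      calc |(inner ℝ (fderiv ℝ B (X t) (Ξ t)) (Ξ t) : ℝ)|
          ≤ ‖fderiv ℝ B (X t) (Ξ t)‖ * ‖Ξ t‖ := abs_real_inner_le_norm _ _
        _ ≤ ‖fderiv ℝ B (X t)‖ * ‖Ξ t‖ * ‖Ξ t‖ := by
            gcongr; exact (fderiv ℝ B (X t)).le_opNorm _
    calc |(-2 * ‖Ξ t‖ * (inner ℝ (fderiv ℝ B (X t) (Ξ t)) (Ξ t) : ℝ))|
        = 2 * ‖Ξ t‖ * |(inner ℝ (fderiv ℝ B (X t) (Ξ t)) (Ξ t) : ℝ)| := by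
          rw [abs_mul, abs_of_nonpos
            (mul_nonpos_of_nonpos_of_nonneg (by norm_num) (norm_nonneg _))]
          ring
      _ ≤ 2 * ‖Ξ t‖ * (‖fderiv ℝ B (X t)‖ * ‖Ξ t‖ * ‖Ξ t‖) := by gcongr
      _ = 2 * h t * ‖Ξ t‖ ^ 2 := by rw [hh]; ring
  -- g = log ‖Ξ‖ = (log q) / 2
  set g : ℝ → ℝ := fun t => Real.log (q t) / 2 with hg
  set g' : ℝ → ℝ := fun t => (q t)⁻¹ * q' t / 2 with hg'
  have hg_deriv : ∀ t, HasDerivAt g (g' t) t := fun t =>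
    ((Real.hasDerivAt_log (hq_pos t).ne').comp t (hq_deriv t)).div_const 2
  have hg'_bound : ∀ t, |g' t| ≤ h t := by
    intro t
    have heq : |g' t| = |q' t| / (q t * 2) := by
      rw [hg', abs_div, abs_mul, abs_inv, abs_of_pos (hq_pos t), abs_two,
        inv_mul_eq_div, div_div]
    rw [heq, div_le_iff₀ (by have := hq_pos t; positivity)]
    calc |q' t| ≤ 2 * h t * q t := hq'_bound t
      _ = h t * (q t * 2) := by ring
  have hexp : ∀ t, Real.exp (g t) = ‖Ξ t‖ := by
    intro t
    have h1 : g t = Real.log ‖Ξ t‖ := by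
      simp only [hg]
      rw [hq_eq, Real.log_pow]
      push_cast
      ring
    rw [h1, Real.exp_log (hnorm_pos t)]
  -- main estimate
  intro t t'
  have hg'_meas : Measurable g' := by
    have : g' = deriv g := funext fun s => (hg_deriv s).deriv.symm
    rw [this]; exact measurable_deriv g
  have hII : IntervalIntegrable g' volume t' t := by
    refine (hint.intervalIntegrable (a := t') (b := t)).mono_fun
      hg'_meas.aestronglyMeasurable.restrict ?_
    filter_upwards with s
    rw [Real.norm_eq_abs, Real.norm_eq_abs]
    exact (hg'_bound s).trans (le_abs_self _)
  have hFTC : ∫ s in t'..t, g' s = g t - g t' :=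
    intervalIntegral.integral_eq_sub_of_hasDerivAt (fun s _ => hg_deriv s) hII
  have hnonneg : 0 ≤ᵐ[volume] h :=
    Filter.Eventually.of_forall fun s =>
      mul_nonneg (norm_nonneg _) (norm_nonneg _)
  have hineq : g t - g t' ≤ A := by
    rw [← hFTC]
    calc ∫ s in t'..t, g' s ≤ |∫ s in t'..t, g' s| := le_abs_self _
      _ ≤ ∫ s in Set.uIoc t' t, ‖g' s‖ := by
          rw [← Real.norm_eq_abs]
          exact intervalIntegral.norm_integral_le_integral_norm_uIoc
      _ ≤ ∫ s in Set.uIoc t' t, h s := by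
          refine setIntegral_mono_on hII.norm.def' hint.integrableOn
            measurableSet_uIoc fun s _ => ?_
          rw [Real.norm_eq_abs]; exact hg'_bound s
      _ ≤ ∫ s, h s := setIntegral_le_integral hint hnonneg
      _ ≤ A := hbound
  have hfin : Real.exp (g t) ≤ Real.exp A * Real.exp (g t') := by
    rw [← Real.exp_add]
    exact Real.exp_le_exp.2 (by linarith)
  rwa [hexp, hexp] at hfin
end
end
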